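/- arXiv:2401.05664 — 2 statements merged into one kernel-verified Lean document; each statement's English description precedes it below -/
import Mathlib

section
/- Let X = (X₁,…,Xₙ) be a random vector on ℝⁿ whose law has a density p with respect to Lebesgue measure, with marginal densities p₁,…,pₙ that are strictly positive, and with marginal cumulative distribution functions F₁,…,Fₙ that are continuous and strictly increasing. Define the copula density c : (0,1)ⁿ → ℝ by c(u₁,…,uₙ) = p(F₁⁻¹(u₁),…,Fₙ⁻¹(uₙ)) / ∏ᵢ pᵢ(Fᵢ⁻¹(uᵢ)). Assume the functions x ↦ p(x)·log(p(x)/∏ᵢ pᵢ(xᵢ)) and u ↦ c(u)·log c(u) are Lebesgue integrable. Then the mutual information of X equals the negative of its copula entropy, i.e. ∫_{ℝⁿ} p(x) · log( p(x) / ∏ᵢ pᵢ(xᵢ) ) dx = ∫_{(0,1)ⁿ} c(u) · log c(u) du. -/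
open MeasureTheory

open Set in
private lemma lintegral_pi_prod_aux : ∀ (n : ℕ) (f : Fin n → ℝ → ENNReal), (∀ i, Measurable (f i)) →
    ∫⁻ x, ∏ i, f i (x i) ∂(Measure.pi fun _ : Fin n => (volume : Measure ℝ))
      = ∏ i, ∫⁻ t, f i t := by
  intro n
  induction n with
  | zero =>
      intro f hf
      simp [Measure.pi_of_empty]
  | succ n ih =>
      intro f hf
      have e := (measurePreserving_piFinSuccAbove (fun _ : Fin (n + 1) => (volume : Measure ℝ)) 0).symm
      have hmeas : Measurable fun x : Fin (n + 1) → ℝ => ∏ i, f i (x i) :=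
        Finset.measurable_prod _ fun i _ => (hf i).comp (measurable_pi_apply i)
      rw [← e.lintegral_comp hmeas]
      simp_rw [MeasurableEquiv.piFinSuccAbove_symm_apply, Fin.insertNthEquiv,
        Fin.prod_univ_succ, Fin.insertNth_zero]
      simp only [Fin.zero_succAbove, Fin.cons_zero, Fin.cons_succ, Equiv.coe_fn_mk, cast_eq]
      have hg : Measurable fun y : Fin n → ℝ => ∏ i : Fin n, f i.succ (y i) :=
        Finset.measurable_prod _ fun i _ => (hf i.succ).comp (measurable_pi_apply i)
      have := lintegral_prod_mul (μ := (volume : Measure ℝ))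
        (ν := Measure.pi fun _ : Fin n => (volume : Measure ℝ))
        (f := f 0) (g := fun y => ∏ i : Fin n, f i.succ (y i))
        (hf 0).aemeasurable hg.aemeasurable
      rw [this, ih (fun i => f i.succ) (fun i => hf i.succ)]

/-- **Mutual information equals negative copula entropy** (Theorem 1 of the paper).
`p` is the joint density of the random vector `X` on `ℝⁿ`, `pm i` the (strictly
positive) marginal densities, `F i` the (continuous, strictly increasing) marginal
CDFs with inverses `Finv i`, and `c` the copula density
`c u = p (F₁⁻¹ u₁, …, Fₙ⁻¹ uₙ) / ∏ᵢ pᵢ (Fᵢ⁻¹ uᵢ)`.  Then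
`∫ p log (p / ∏ pᵢ) = ∫_{(0,1)ⁿ} c log c`. -/
theorem mutual_information_eq_neg_copula_entropy
    (n : ℕ)
    (p : (Fin n → ℝ) → ℝ)            -- joint density of X
    (pm : Fin n → ℝ → ℝ)             -- marginal densities
    (F : Fin n → ℝ → ℝ)              -- marginal CDFs
    (Finv : Fin n → ℝ → ℝ)           -- inverses of the marginal CDFs
    (c : (Fin n → ℝ) → ℝ)            -- copula density
    -- p is a probability density:
    (hp_meas : Measurable p)
    (hp_nonneg : ∀ x, 0 ≤ p x)
    (hp_prob : ∫ x, p x = 1)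
    -- pm i is the i-th marginal density of the law of X:
    (hpm_meas : ∀ i, Measurable (pm i))
    (hpm_pos : ∀ i t, 0 < pm i t)
    (h_marg : ∀ i : Fin n,
      Measure.map (fun x => x i) (volume.withDensity fun x => ENNReal.ofReal (p x))
        = volume.withDensity fun t => ENNReal.ofReal (pm i t))
    -- F i is the CDF of the i-th marginal, continuous and strictly increasing:
    (hF : ∀ i t, F i t = ∫ s in Set.Iic t, pm i s)
    (hF_cont : ∀ i, Continuous (F i))
    (hF_mono : ∀ i, StrictMono (F i))
    (hFinv_left : ∀ i t, Finv i (F i t) = t)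
    (hFinv_right : ∀ i, ∀ u ∈ Set.Ioo (0 : ℝ) 1, F i (Finv i u) = u)
    -- the copula density:
    (hc : ∀ u, c u = p (fun i => Finv i (u i)) / ∏ i, pm i (Finv i (u i)))
    -- integrability assumptions:
    (h_int₁ : Integrable (fun x => p x * Real.log (p x / ∏ i, pm i (x i))))
    (h_int₂ : IntegrableOn (fun u => c u * Real.log (c u))
      (Set.univ.pi fun _ : Fin n => Set.Ioo (0 : ℝ) 1)) :
    ∫ x, p x * Real.log (p x / ∏ i, pm i (x i))
      = ∫ u in Set.univ.pi (fun _ : Fin n => Set.Ioo (0 : ℝ) 1),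
          c u * Real.log (c u) := by
  classical
  set box : Set (Fin n → ℝ) := Set.univ.pi fun _ : Fin n => Set.Ioo (0 : ℝ) 1 with hbox
  have hbox_meas : MeasurableSet box := MeasurableSet.univ_pi fun i => measurableSet_Ioo
  -- the joint law
  have hp_int : Integrable p := integrable_of_integral_eq_one hp_prob
  set μX : Measure (Fin n → ℝ) := volume.withDensity fun x => ENNReal.ofReal (p x) with hμX
  have hμX_univ : μX Set.univ = 1 := by
    rw [hμX, withDensity_apply _ MeasurableSet.univ, Measure.restrict_univ,
      ← ofReal_integral_eq_lintegral_ofReal hp_int (Filter.Eventually.of_forall hp_nonneg),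
      hp_prob, ENNReal.ofReal_one]
  haveI : IsProbabilityMeasure μX := ⟨hμX_univ⟩
  set μm : Fin n → Measure ℝ := fun i => volume.withDensity fun t => ENNReal.ofReal (pm i t)
    with hμm
  have hprob : ∀ i, IsProbabilityMeasure (μm i) := by
    intro i
    rw [hμm]
    simp only
    rw [← h_marg i]
    exact Measure.isProbabilityMeasure_map (measurable_pi_apply i).aemeasurable
  haveI hsf : ∀ i, SigmaFinite (μm i) := fun i => by
    haveI := hprob i; infer_instance
  -- the marginal densities are integrable with total mass one
  have hpm_lint : ∀ i, ∫⁻ t, ENNReal.ofReal (pm i t) = 1 := by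
    intro i
    have h := (hprob i).measure_univ
    rwa [hμm, withDensity_apply _ MeasurableSet.univ, Measure.restrict_univ] at h
  have hpm_int : ∀ i, Integrable (pm i) := by
    intro i
    refine ⟨(hpm_meas i).aestronglyMeasurable, ?_⟩
    rw [hasFiniteIntegral_iff_ofReal (Filter.Eventually.of_forall fun t => (hpm_pos i t).le),
      hpm_lint i]
    exact ENNReal.one_lt_top
  have hpm_total : ∀ i, ∫ t, pm i t = 1 := by
    intro i
    have h := ofReal_integral_eq_lintegral_ofReal (hpm_int i)
      (Filter.Eventually.of_forall fun t => (hpm_pos i t).le)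
    rw [hpm_lint i] at h
    have h' := congrArg ENNReal.toReal h
    rwa [ENNReal.toReal_ofReal (integral_nonneg fun t => (hpm_pos i t).le), ENNReal.toReal_one]
      at h'
  -- positivity of set integrals of the marginal densities
  have hsetpos : ∀ i (s : Set ℝ), volume s ≠ 0 → 0 < ∫ t in s, pm i t := by
    intro i s h0
    rw [setIntegral_pos_iff_support_of_nonneg_ae
      (Filter.Eventually.of_forall fun t => (hpm_pos i t).le) (hpm_int i).integrableOn]
    have hsupp : Function.support (pm i) = Set.univ :=
      Set.eq_univ_of_forall fun t => (hpm_pos i t).ne'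
    rw [hsupp, Set.univ_inter]
    exact pos_iff_ne_zero.mpr h0
  have hF_pos : ∀ i t, 0 < F i t := by
    intro i t
    rw [hF i t]
    exact hsetpos i _ (by simp [Real.volume_Iic])
  have hF_lt_one : ∀ i t, F i t < 1 := by
    intro i t
    have hsplit : F i t + ∫ s in Set.Ioi t, pm i s = 1 := by
      rw [hF i t, intervalIntegral.integral_Iic_add_Ioi (hpm_int i).integrableOn (hpm_int i).integrableOn]
      exact hpm_total i
    have hpos : 0 < ∫ s in Set.Ioi t, pm i s := hsetpos i _ (by simp [Real.volume_Ioi])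
    linarith
  -- μm on half-lines
  have hμm_Iic : ∀ i t, μm i (Set.Iic t) = ENNReal.ofReal (F i t) := by
    intro i t
    rw [hμm]
    simp only
    rw [withDensity_apply _ measurableSet_Iic,
      ← ofReal_integral_eq_lintegral_ofReal (hpm_int i).integrableOn
        (Filter.Eventually.of_forall fun t => (hpm_pos i t).le),
      ← hF i t]
  -- order characterization of Finv on (0,1)
  have hFinv_le : ∀ i t, ∀ u ∈ Set.Ioo (0 : ℝ) 1, (Finv i u ≤ t ↔ u ≤ F i t) := by
    intro i t u hu
    constructor
    · intro h
      calc u = F i (Finv i u) := (hFinv_right i u hu).symm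
        _ ≤ F i t := (hF_mono i).monotone h
    · intro h
      rw [← (hF_mono i).le_iff_le, hFinv_right i u hu]
      exact h
  -- measurable version of Finv
  set G : Fin n → ℝ → ℝ := fun i u => if u ∈ Set.Ioo (0 : ℝ) 1 then Finv i u else 0 with hGdef
  have hG_eq : ∀ i, ∀ u ∈ Set.Ioo (0 : ℝ) 1, G i u = Finv i u := by
    intro i u hu; simp only [hGdef, if_pos hu]
  have hG_meas : ∀ i, Measurable (G i) := by
    intro i
    apply measurable_of_Iic
    intro t
    by_cases ht : (0 : ℝ) ≤ t
    · have hset : G i ⁻¹' Set.Iic t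
          = (Set.Ioo (0 : ℝ) 1 ∩ Set.Iic (F i t)) ∪ (Set.Ioo (0 : ℝ) 1)ᶜ := by
        ext u
        by_cases hu : u ∈ Set.Ioo (0 : ℝ) 1
        · simp only [Set.mem_preimage, Set.mem_Iic, hGdef, if_pos hu, Set.mem_union,
            Set.mem_inter_iff, Set.mem_compl_iff, hu, not_true, or_false, true_and]
          exact hFinv_le i t u hu
        · simp only [Set.mem_preimage, Set.mem_Iic, hGdef, if_neg hu, Set.mem_union,
            Set.mem_inter_iff, Set.mem_compl_iff, hu, not_false_iff, or_true, false_and,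
            iff_true]
          exact ht
      rw [hset]
      exact (measurableSet_Ioo.inter measurableSet_Iic).union measurableSet_Ioo.compl
    · have hset : G i ⁻¹' Set.Iic t = Set.Ioo (0 : ℝ) 1 ∩ Set.Iic (F i t) := by
        ext u
        by_cases hu : u ∈ Set.Ioo (0 : ℝ) 1
        · simp only [Set.mem_preimage, Set.mem_Iic, hGdef, if_pos hu, Set.mem_inter_iff, hu,
            true_and]
          exact hFinv_le i t u hu
        · simp only [Set.mem_preimage, Set.mem_Iic, hGdef, if_neg hu, Set.mem_inter_iff, hu,
            false_and, iff_false]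
          exact ht
      rw [hset]
      exact measurableSet_Ioo.inter measurableSet_Iic
  haveI hfin : IsFiniteMeasure ((volume : Measure ℝ).restrict (Set.Ioo (0 : ℝ) 1)) :=
    ⟨by rw [Measure.restrict_apply_univ, Real.volume_Ioo]; exact ENNReal.ofReal_lt_top⟩
  -- pushforward of the uniform measure under G i is the marginal law
  have hmapG : ∀ i, Measure.map (G i) (volume.restrict (Set.Ioo (0 : ℝ) 1)) = μm i := by
    intro i
    haveI := hprob i
    haveI : IsFiniteMeasure (Measure.map (G i) (volume.restrict (Set.Ioo (0 : ℝ) 1))) := by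
      constructor
      rw [Measure.map_apply (hG_meas i) MeasurableSet.univ, Set.preimage_univ]
      exact measure_lt_top _ _
    refine Measure.ext_of_Iic _ _ fun t => ?_
    rw [Measure.map_apply (hG_meas i) measurableSet_Iic,
      Measure.restrict_apply ((hG_meas i) measurableSet_Iic), hμm_Iic i t]
    have hset : G i ⁻¹' Set.Iic t ∩ Set.Ioo 0 1 = Set.Ioc (0 : ℝ) (F i t) := by
      ext u
      constructor
      · rintro ⟨h1, hu⟩
        have h1' : Finv i u ≤ t := by rwa [Set.mem_preimage, Set.mem_Iic, hG_eq i u hu] at h1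
        exact ⟨hu.1, (hFinv_le i t u hu).mp h1'⟩
      · rintro ⟨h0, hFt⟩
        have hu : u ∈ Set.Ioo (0 : ℝ) 1 := ⟨h0, lt_of_le_of_lt hFt (hF_lt_one i t)⟩
        refine ⟨?_, hu⟩
        rw [Set.mem_preimage, Set.mem_Iic, hG_eq i u hu]
        exact (hFinv_le i t u hu).mpr hFt
    rw [hset, Real.volume_Ioc, sub_zero]
  -- the componentwise map
  set T : (Fin n → ℝ) → (Fin n → ℝ) := fun u i => G i (u i) with hTdef
  have hT_meas : Measurable T :=
    measurable_pi_lambda _ fun i => (hG_meas i).comp (measurable_pi_apply i)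
  have hmapT : Measure.map T (Measure.pi fun _ : Fin n => volume.restrict (Set.Ioo (0 : ℝ) 1))
      = Measure.pi μm := by
    refine (Measure.pi_eq fun s hs => ?_).symm
    rw [Measure.map_apply hT_meas (MeasurableSet.univ_pi hs)]
    have hpre : T ⁻¹' Set.univ.pi s = Set.univ.pi fun i => G i ⁻¹' s i := by
      ext u
      simp [hTdef, Set.mem_pi]
    rw [hpre, Measure.pi_pi]
    exact Finset.prod_congr rfl fun i _ => by
      rw [← hmapG i, Measure.map_apply (hG_meas i) (hs i)]
  have hrestrict : Measure.pi (fun _ : Fin n => volume.restrict (Set.Ioo (0 : ℝ) 1))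
      = (volume : Measure (Fin n → ℝ)).restrict box := by
    refine Measure.pi_eq fun s hs => ?_
    rw [hbox, Measure.restrict_apply (MeasurableSet.univ_pi hs), volume_pi,
      ← Set.pi_inter_distrib, Measure.pi_pi]
    exact Finset.prod_congr rfl fun i _ => (Measure.restrict_apply (hs i)).symm
  -- the product of the marginal laws as a density measure
  have hwd : Measure.pi μm = (volume : Measure (Fin n → ℝ)).withDensity
      (fun x => ENNReal.ofReal (∏ i, pm i (x i))) := by
    refine Measure.pi_eq fun s hs => ?_
    rw [withDensity_apply _ (MeasurableSet.univ_pi hs)]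
    have h1 : ∀ x : Fin n → ℝ,
        ENNReal.ofReal (∏ i, pm i (x i)) = ∏ i, ENNReal.ofReal (pm i (x i)) := fun x =>
      ENNReal.ofReal_prod_of_nonneg fun i _ => (hpm_pos i (x i)).le
    simp_rw [h1]
    rw [← lintegral_indicator (MeasurableSet.univ_pi hs)]
    have hind : ∀ x : Fin n → ℝ,
        (Set.univ.pi s).indicator (fun x => ∏ i, ENNReal.ofReal (pm i (x i))) x
          = ∏ i, (s i).indicator (fun t => ENNReal.ofReal (pm i t)) (x i) := by
      intro x
      by_cases hx : x ∈ Set.univ.pi s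
      · rw [Set.indicator_of_mem hx]
        exact Finset.prod_congr rfl fun i _ =>
          (Set.indicator_of_mem (hx i (Set.mem_univ i))
            (fun t => ENNReal.ofReal (pm i t))).symm
      · rw [Set.indicator_of_notMem hx]
        have : ∃ i, x i ∉ s i := by
          by_contra h
          push_neg at h
          exact hx fun i _ => h i
        obtain ⟨i, hi⟩ := this
        symm
        apply Finset.prod_eq_zero (Finset.mem_univ i)
        rw [Set.indicator_of_notMem hi]
    simp_rw [hind]
    rw [volume_pi, lintegral_pi_prod_aux n _
      (fun i => ((hpm_meas i).ennreal_ofReal).indicator (hs i))]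
    exact Finset.prod_congr rfl fun i _ => by
      rw [lintegral_indicator (hs i), ← withDensity_apply _ (hs i)]
  -- the functions
  set φ : (Fin n → ℝ) → ℝ := fun x => p x / ∏ i, pm i (x i) with hφdef
  set ψ : (Fin n → ℝ) → ℝ := fun x => φ x * Real.log (φ x) with hψdef
  have hprod_meas : Measurable fun x : Fin n → ℝ => ∏ i, pm i (x i) :=
    Finset.measurable_prod _ fun i _ => (hpm_meas i).comp (measurable_pi_apply i)
  have hφ_meas : Measurable φ := hp_meas.div hprod_meas
  have hψ_meas : Measurable ψ := hφ_meas.mul (Real.measurable_log.comp hφ_meas)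
  -- almost-everywhere identification of the integrand on the box
  have hae : ∀ᵐ u ∂(volume : Measure (Fin n → ℝ)).restrict box,
      c u * Real.log (c u) = ψ (T u) := by
    refine (ae_restrict_mem hbox_meas).mono fun u hu => ?_
    have hTu : T u = fun i => Finv i (u i) :=
      funext fun i => hG_eq i (u i) (hu i (Set.mem_univ i))
    have hcu : c u = φ (T u) := by
      rw [hφdef, hTu, hc u]
    rw [hψdef]
    simp only
    rw [hcu]
  -- pointwise identification after unfolding the density
  have hpt : ∀ x : Fin n → ℝ,
      (∏ i, pm i (x i)).toNNReal • ψ x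
        = p x * Real.log (p x / ∏ i, pm i (x i)) := by
    intro x
    have hpos : 0 < ∏ i, pm i (x i) := Finset.prod_pos fun i _ => hpm_pos i (x i)
    have hne : (∏ i, pm i (x i)) ≠ 0 := hpos.ne'
    rw [NNReal.smul_def, Real.coe_toNNReal _ hpos.le, hψdef]
    simp only [hφdef, smul_eq_mul]
    field_simp
  -- the density-measure identity
  have h10 : ∫ y, ψ y ∂((volume : Measure (Fin n → ℝ)).withDensity
      (fun x => ENNReal.ofReal (∏ i, pm i (x i))))
      = ∫ x, p x * Real.log (p x / ∏ i, pm i (x i)) := by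
    have hfm : Measurable fun x : Fin n → ℝ => (∏ i, pm i (x i)).toNNReal :=
      hprod_meas.real_toNNReal
    have hwd' : (fun x : Fin n → ℝ => ENNReal.ofReal (∏ i, pm i (x i)))
        = fun x : Fin n → ℝ => ((∏ i, pm i (x i)).toNNReal : ENNReal) := rfl
    rw [hwd', integral_withDensity_eq_integral_smul hfm ψ]
    exact integral_congr_ae (Filter.Eventually.of_forall hpt)
  have h8 : ∫ u, ψ (T u) ∂(Measure.pi fun _ : Fin n => volume.restrict (Set.Ioo (0 : ℝ) 1))
      = ∫ y, ψ y ∂(Measure.pi μm) := by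
    rw [← hmapT, integral_map hT_meas.aemeasurable hψ_meas.aestronglyMeasurable]
  calc ∫ x, p x * Real.log (p x / ∏ i, pm i (x i))
      = ∫ y, ψ y ∂((volume : Measure (Fin n → ℝ)).withDensity
          (fun x => ENNReal.ofReal (∏ i, pm i (x i)))) := h10.symm
    _ = ∫ y, ψ y ∂(Measure.pi μm) := by rw [hwd]
    _ = ∫ u, ψ (T u) ∂(Measure.pi fun _ : Fin n => volume.restrict (Set.Ioo (0 : ℝ) 1)) :=
        h8.symm
    _ = ∫ u in box, ψ (T u) := by rw [hrestrict]
    _ = ∫ u in box, c u * Real.log (c u) := (integral_congr_ae hae).symm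
end

section
/- Let X = (X₁,…,Xₙ) be a random vector on ℝⁿ whose law has a density p with respect to Lebesgue measure, with marginal densities p₁,…,pₙ that are strictly positive, and with marginal cumulative distribution functions F₁,…,Fₙ that are continuous and strictly increasing. Define the copula density c : (0,1)ⁿ → ℝ by c(u₁,…,uₙ) = p(F₁⁻¹(u₁),…,Fₙ⁻¹(uₙ)) / ∏ᵢ pᵢ(Fᵢ⁻¹(uᵢ)). Assume the functions x ↦ p(x) log p(x), xᵢ ↦ pᵢ(xᵢ) log pᵢ(xᵢ) for each i, and u ↦ c(u) log c(u) are Lebesgue integrable. Then the joint differential entropy decomposes as the sum of the marginal differential entropies plus the copula entropy: −∫_{ℝⁿ} p(x) log p(x) dx = ∑ᵢ ( −∫_ℝ pᵢ(t) log pᵢ(t) dt ) + ( −∫_{(0,1)ⁿ} c(u) log c(u) du ). -/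
open MeasureTheory
open scoped ENNReal NNReal

section Aux
open Set

lemma aux_pi_restrict {n : ℕ} (s : Fin n → Set ℝ) (hs : ∀ i, MeasurableSet (s i)) :
    Measure.pi (fun i => (volume : Measure ℝ).restrict (s i))
      = (volume : Measure (Fin n → ℝ)).restrict (Set.univ.pi s) := by
  refine Measure.pi_eq fun t ht => ?_
  rw [Measure.restrict_apply (MeasurableSet.univ_pi ht), ← Set.pi_inter_distrib,
    volume_pi, Measure.pi_pi]
  exact Finset.prod_congr rfl fun i _ => (Measure.restrict_apply (ht i)).symm

lemma aux_pi_withDensity {n : ℕ} (f : Fin n → ℝ → ℝ) (hmeas : ∀ i, Measurable (f i))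
    (hnn : ∀ i t, 0 ≤ f i t) (hint : ∀ i, Integrable (f i)) :
    Measure.pi (fun i => (volume : Measure ℝ).withDensity fun t => ENNReal.ofReal (f i t))
      = (volume : Measure (Fin n → ℝ)).withDensity
          (fun x => ENNReal.ofReal (∏ i, f i (x i))) := by
  refine Measure.pi_eq fun s hs => ?_
  set g : Fin n → ℝ → ℝ := fun i => (s i).indicator (f i) with hg
  have hg_int : ∀ i, Integrable (g i) := fun i =>
    ((hint i).integrableOn (s := s i)).integrable_indicator (hs i)
  have hg_nn : ∀ i t, 0 ≤ g i t := fun i t => Set.indicator_nonneg (fun t _ => hnn i t) t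
  have key : ∀ x : Fin n → ℝ, (Set.univ.pi s).indicator (fun x => ∏ i, f i (x i)) x
      = ∏ i, g i (x i) := by
    intro x
    by_cases hx : x ∈ Set.univ.pi s
    · rw [Set.indicator_of_mem hx]
      exact Finset.prod_congr rfl fun i _ =>
        (Set.indicator_of_mem (hx i (Set.mem_univ i)) _).symm
    · rw [Set.indicator_of_notMem hx]
      obtain ⟨i, hi⟩ : ∃ i, x i ∉ s i := by simpa [Set.mem_pi] using hx
      exact (Finset.prod_eq_zero (Finset.mem_univ i)
        (by rw [hg]; simp [Set.indicator_of_notMem hi])).symm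
  rw [withDensity_apply _ (MeasurableSet.univ_pi hs), ← lintegral_indicator (MeasurableSet.univ_pi hs)]
  calc ∫⁻ (x : Fin n → ℝ), (Set.univ.pi s).indicator
          (fun x => ENNReal.ofReal (∏ i, f i (x i))) x
      = ∫⁻ (x : Fin n → ℝ), ENNReal.ofReal
          ((Set.univ.pi s).indicator (fun x => ∏ i, f i (x i)) x) := by
        refine lintegral_congr fun x => ?_
        by_cases hx : x ∈ Set.univ.pi s <;> simp [hx]
    _ = ∫⁻ (x : Fin n → ℝ), ENNReal.ofReal (∏ i, g i (x i)) := by simp_rw [key]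
    _ = ENNReal.ofReal (∫ (x : Fin n → ℝ), ∏ i, g i (x i)) := by
        rw [volume_pi, ← ofReal_integral_eq_lintegral_ofReal (Integrable.fin_nat_prod hg_int)
          (Filter.Eventually.of_forall fun x => Finset.prod_nonneg fun i _ => hg_nn i (x i))]
    _ = ENNReal.ofReal (∏ i, ∫ t, g i t) := by rw [volume_pi, integral_fin_nat_prod_eq_prod]
    _ = ∏ i, ENNReal.ofReal (∫ t, g i t) :=
        ENNReal.ofReal_prod_of_nonneg fun i _ => integral_nonneg (hg_nn i)
    _ = ∏ i, ((volume : Measure ℝ).withDensity fun t => ENNReal.ofReal (f i t)) (s i) := by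
        refine Finset.prod_congr rfl fun i _ => ?_
        rw [withDensity_apply _ (hs i), ← ofReal_integral_eq_lintegral_ofReal
          ((hint i).integrableOn) (Filter.Eventually.of_forall fun t => hnn i t),
          integral_indicator (hs i)]


lemma aux_map_cdf (pm F Finv : ℝ → ℝ) (hmeas : Measurable pm) (hpos : ∀ t, 0 < pm t)
    (hint : Integrable pm) (hmass : ∫ t, pm t = 1)
    (hF : ∀ t, F t = ∫ s in Set.Iic t, pm s) (hF_mono : StrictMono F)
    (hF_cont : Continuous F)
    (hFinv : ∀ u ∈ Set.Ioo (0 : ℝ) 1, F (Finv u) = u) :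
    Measure.map F (volume.withDensity fun t => ENNReal.ofReal (pm t))
      = volume.restrict (Set.Ioo (0 : ℝ) 1) := by
  set ν : Measure ℝ := volume.withDensity fun t => ENNReal.ofReal (pm t) with hν
  have hIic : ∀ s : ℝ, ν (Iic s) = ENNReal.ofReal (F s) := by
    intro s
    rw [hν, withDensity_apply _ measurableSet_Iic,
      ← ofReal_integral_eq_lintegral_ofReal hint.integrableOn
        (Filter.Eventually.of_forall fun t => (hpos t).le), ← hF s]
  have hF01 : ∀ t, 0 < F t ∧ F t < 1 := by
    intro t
    have hpos_int : ∀ (u : Set ℝ), MeasurableSet u → volume u ≠ 0 → 0 < ∫ s in u, pm s := by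
      intro u hu hu0
      refine (setIntegral_pos_iff_support_of_nonneg_ae
        (Filter.Eventually.of_forall fun t => (hpos t).le) hint.integrableOn).mpr ?_
      have : Function.support pm = Set.univ := by
        ext t; simp [Function.mem_support, (hpos t).ne']
      rw [this, Set.univ_inter]
      exact pos_iff_ne_zero.mpr hu0
    have hsplit : (∫ s in Iic t, pm s) + ∫ s in Ioi t, pm s = 1 := by
      rw [← setIntegral_union (Set.Iic_disjoint_Ioi le_rfl) measurableSet_Ioi
        hint.integrableOn hint.integrableOn, Set.Iic_union_Ioi, setIntegral_univ, hmass]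
    constructor
    · rw [hF]
      exact hpos_int _ measurableSet_Iic (by simp)
    · have h2 : 0 < ∫ s in Ioi t, pm s := hpos_int _ measurableSet_Ioi (by simp)
      rw [hF]; linarith
  have hν_univ : ν Set.univ = 1 := by
    rw [hν, withDensity_apply _ MeasurableSet.univ, Measure.restrict_univ,
      ← ofReal_integral_eq_lintegral_ofReal hint
        (Filter.Eventually.of_forall fun t => (hpos t).le), hmass, ENNReal.ofReal_one]
  have hνprob : IsProbabilityMeasure ν := ⟨hν_univ⟩
  have hFm : Measurable F := hF_cont.measurable
  have : IsProbabilityMeasure (Measure.map F ν) :=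
    Measure.isProbabilityMeasure_map hFm.aemeasurable
  refine Measure.ext_of_Iic (Measure.map F ν) _ fun a => ?_
  rw [Measure.map_apply hFm measurableSet_Iic, Measure.restrict_apply measurableSet_Iic]
  rcases le_or_gt a 0 with ha | ha
  · have h1 : F ⁻¹' Iic a = ∅ := by
      ext t; simp only [mem_preimage, mem_Iic, mem_empty_iff_false, iff_false, not_le]
      exact lt_of_le_of_lt ha (hF01 t).1
    have h2 : Iic a ∩ Ioo (0:ℝ) 1 = ∅ := by
      ext x; simp only [mem_inter_iff, mem_Iic, mem_Ioo, mem_empty_iff_false, iff_false]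
      rintro ⟨hx, hx0, -⟩; linarith
    rw [h1, h2]; simp
  · rcases lt_or_ge a 1 with ha1 | ha1
    · have h1 : F ⁻¹' Iic a = Iic (Finv a) := by
        ext t
        simp only [mem_preimage, mem_Iic]
        constructor
        · intro h
          by_contra hlt
          push_neg at hlt
          have := hF_mono hlt
          rw [hFinv a ⟨ha, ha1⟩] at this
          linarith
        · intro h
          calc F t ≤ F (Finv a) := hF_mono.monotone h
            _ = a := hFinv a ⟨ha, ha1⟩
      have h2 : Iic a ∩ Ioo (0:ℝ) 1 = Ioc 0 a := by
        ext x
        simp only [mem_inter_iff, mem_Iic, mem_Ioo, mem_Ioc]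
        constructor
        · rintro ⟨h, h0, -⟩; exact ⟨h0, h⟩
        · rintro ⟨h0, h⟩; exact ⟨h, h0, lt_of_le_of_lt h ha1⟩
      rw [h1, h2, hIic, hFinv a ⟨ha, ha1⟩, Real.volume_Ioc, sub_zero]
    · have h1 : F ⁻¹' Iic a = Set.univ := by
        ext t; simp only [mem_preimage, mem_Iic, mem_univ, iff_true]
        exact le_of_lt (lt_of_lt_of_le (hF01 t).2 ha1)
      have h2 : Iic a ∩ Ioo (0:ℝ) 1 = Ioo 0 1 := by
        refine Set.inter_eq_self_of_subset_right fun x hx => ?_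
        exact le_trans (le_of_lt hx.2) ha1
      rw [h1, h2, hν_univ, Real.volume_Ioo, sub_zero, ENNReal.ofReal_one]

end Aux

/-- **Entropy decomposition via copula entropy** (Corollary 1 of the paper).
With `p` the joint density of `X` on `ℝⁿ`, `pm i` the strictly positive marginal
densities, `F i` the continuous strictly increasing marginal CDFs with inverses
`Finv i`, and `c` the copula density, the joint differential entropy equals the sum
of the marginal differential entropies plus the copula entropy:
`H(X) = ∑ᵢ H(Xᵢ) + H_c(X)`. -/
theorem entropy_eq_sum_marginal_entropies_add_copula_entropy
    (n : ℕ)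
    (p : (Fin n → ℝ) → ℝ)            -- joint density of X
    (pm : Fin n → ℝ → ℝ)             -- marginal densities
    (F : Fin n → ℝ → ℝ)              -- marginal CDFs
    (Finv : Fin n → ℝ → ℝ)           -- inverses of the marginal CDFs
    (c : (Fin n → ℝ) → ℝ)            -- copula density
    -- p is a probability density:
    (hp_meas : Measurable p)
    (hp_nonneg : ∀ x, 0 ≤ p x)
    (hp_prob : ∫ x, p x = 1)
    -- pm i is the i-th marginal density of the law of X:
    (hpm_meas : ∀ i, Measurable (pm i))
    (hpm_pos : ∀ i t, 0 < pm i t)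
    (h_marg : ∀ i : Fin n,
      Measure.map (fun x => x i) (volume.withDensity fun x => ENNReal.ofReal (p x))
        = volume.withDensity fun t => ENNReal.ofReal (pm i t))
    -- F i is the CDF of the i-th marginal, continuous and strictly increasing:
    (hF : ∀ i t, F i t = ∫ s in Set.Iic t, pm i s)
    (hF_cont : ∀ i, Continuous (F i))
    (hF_mono : ∀ i, StrictMono (F i))
    (hFinv_left : ∀ i t, Finv i (F i t) = t)
    (hFinv_right : ∀ i, ∀ u ∈ Set.Ioo (0 : ℝ) 1, F i (Finv i u) = u)
    -- the copula density:
    (hc : ∀ u, c u = p (fun i => Finv i (u i)) / ∏ i, pm i (Finv i (u i)))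
    -- integrability assumptions:
    (h_int₁ : Integrable (fun x => p x * Real.log (p x)))
    (h_int₂ : ∀ i, Integrable (fun t => pm i t * Real.log (pm i t)))
    (h_int₃ : IntegrableOn (fun u => c u * Real.log (c u))
      (Set.univ.pi fun _ : Fin n => Set.Ioo (0 : ℝ) 1)) :
    -∫ x, p x * Real.log (p x)
      = (∑ i, -∫ t, pm i t * Real.log (pm i t))
        + (-∫ u in Set.univ.pi (fun _ : Fin n => Set.Ioo (0 : ℝ) 1),
            c u * Real.log (c u)) := by
  classical
  set box : Set (Fin n → ℝ) := Set.univ.pi fun _ : Fin n => Set.Ioo (0 : ℝ) 1 with hbox_def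
  set μ : Measure (Fin n → ℝ) := volume.withDensity fun x => ENNReal.ofReal (p x) with hμ
  -- basic integrability of p
  have hIp : Integrable p := by
    by_contra h
    rw [integral_undef h] at hp_prob
    norm_num at hp_prob
  have hμuniv : μ Set.univ = 1 := by
    rw [hμ, withDensity_apply _ MeasurableSet.univ, Measure.restrict_univ,
      ← ofReal_integral_eq_lintegral_ofReal hIp
        (Filter.Eventually.of_forall hp_nonneg), hp_prob, ENNReal.ofReal_one]
  have hνuniv : ∀ i, (volume.withDensity fun t => ENNReal.ofReal (pm i t)) Set.univ = 1 := by
    intro i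
    rw [← h_marg i, Measure.map_apply (measurable_pi_apply i) MeasurableSet.univ,
      Set.preimage_univ]
    exact hμuniv
  have hlint : ∀ i, ∫⁻ t, ENNReal.ofReal (pm i t) = 1 := by
    intro i
    have := hνuniv i
    rwa [withDensity_apply _ MeasurableSet.univ, Measure.restrict_univ] at this
  have hIpm : ∀ i, Integrable (pm i) := by
    intro i
    refine ⟨(hpm_meas i).aestronglyMeasurable, ?_⟩
    rw [hasFiniteIntegral_iff_norm]
    have : ∀ t, ENNReal.ofReal ‖pm i t‖ = ENNReal.ofReal (pm i t) := fun t => by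
      rw [Real.norm_eq_abs, abs_of_pos (hpm_pos i t)]
    simp_rw [this, hlint i]
    exact ENNReal.one_lt_top
  have hmass : ∀ i, ∫ t, pm i t = 1 := by
    intro i
    have := ofReal_integral_eq_lintegral_ofReal (hIpm i)
      (Filter.Eventually.of_forall fun t => (hpm_pos i t).le)
    rw [hlint i] at this
    have h0 : 0 ≤ ∫ t, pm i t := integral_nonneg fun t => (hpm_pos i t).le
    rw [← ENNReal.ofReal_one] at this
    exact (ENNReal.ofReal_eq_ofReal_iff h0 zero_le_one).mp this
  -- the CDF maps push ν i to the uniform measure on (0,1)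
  have hmap : ∀ i, Measure.map (F i) (volume.withDensity fun t => ENNReal.ofReal (pm i t))
      = volume.restrict (Set.Ioo 0 1) := fun i =>
    aux_map_cdf (pm i) (F i) (Finv i) (hpm_meas i) (hpm_pos i) (hIpm i) (hmass i)
      (hF i) (hF_mono i) (hF_cont i) (hFinv_right i)
  set Φ : (Fin n → ℝ) → (Fin n → ℝ) := fun x i => F i (x i) with hΦdef
  have hΦ : MeasurePreserving Φ
      (Measure.pi fun i => volume.withDensity fun t => ENNReal.ofReal (pm i t))
      (Measure.pi fun _ : Fin n => (volume : Measure ℝ).restrict (Set.Ioo 0 1)) :=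
    measurePreserving_pi _ _ fun i => ⟨(hF_cont i).measurable, hmap i⟩
  set Q : (Fin n → ℝ) → ℝ := fun x => ∏ i, pm i (x i) with hQdef
  have hQNN : Measurable fun x => (Q x).toNNReal := by
    exact measurable_real_toNNReal.comp (Finset.measurable_prod _ fun i _ =>
      (hpm_meas i).comp (measurable_pi_apply i))
  have hpmNN : ∀ i, Measurable fun t => (pm i t).toNNReal := fun i =>
    measurable_real_toNNReal.comp (hpm_meas i)
  have hQpos : ∀ x, 0 < Q x := fun x => Finset.prod_pos fun i _ => hpm_pos i (x i)
  have hQmeas : Measurable Q :=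
    Finset.measurable_prod _ fun i _ => (hpm_meas i).comp (measurable_pi_apply i)
  have hpiν : (Measure.pi fun i => volume.withDensity fun t => ENNReal.ofReal (pm i t))
      = volume.withDensity fun x => ENNReal.ofReal (Q x) :=
    aux_pi_withDensity pm hpm_meas (fun i t => (hpm_pos i t).le) hIpm
  have hmapΦ : Measure.map Φ (volume.withDensity fun x => ENNReal.ofReal (Q x))
      = volume.restrict box := by
    rw [← hpiν, hΦ.map_eq, aux_pi_restrict _ fun _ => measurableSet_Ioo]
  set W : Measure (Fin n → ℝ) := volume.withDensity fun x => ENNReal.ofReal (Q x) with hW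
  set G : (Fin n → ℝ) → ℝ := fun u => c u * Real.log (c u) with hG
  -- transfer the copula entropy integral to an integral over ℝⁿ
  have hC1 : ∫ u in box, G u = ∫ x, G (Φ x) ∂W := by
    calc ∫ u in box, G u = ∫ u, G u ∂(Measure.map Φ W) := by rw [hmapΦ]
      _ = ∫ x, G (Φ x) ∂W := integral_map hΦ.measurable.aemeasurable (by rw [hmapΦ]; exact h_int₃.1)
  have hsmulQ : ∀ (g : (Fin n → ℝ) → ℝ), ∫ x, g x ∂W = ∫ x, Q x * g x := by
    intro g
    have : (fun x => ENNReal.ofReal (Q x)) = fun x => ((Q x).toNNReal : ℝ≥0∞) := rfl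
    rw [hW, this, integral_withDensity_eq_integral_smul hQNN g]
    refine integral_congr_ae (Filter.Eventually.of_forall fun x => ?_)
    simp [NNReal.smul_def, Real.coe_toNNReal _ (hQpos x).le]
  -- the pointwise identity
  have hpt : ∀ x, Q x * G (Φ x)
      = p x * Real.log (p x) - ∑ i, p x * Real.log (pm i (x i)) := by
    intro x
    have hcΦ : c (Φ x) = p x / Q x := by
      simp only [hc, hΦdef, hFinv_left, hQdef]
    rcases eq_or_lt_of_le (hp_nonneg x) with h0 | h0
    · simp [hG, hcΦ, ← h0]
    · have hQ := hQpos x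
      have hlogQ : Real.log (Q x) = ∑ i, Real.log (pm i (x i)) := by
        rw [hQdef]
        exact Real.log_prod fun i _ => (hpm_pos i (x i)).ne'
      rw [hG]
      simp only
      rw [hcΦ, Real.log_div h0.ne' hQ.ne']
      have h1 : Q x * (p x / Q x * (Real.log (p x) - Real.log (Q x)))
          = p x * Real.log (p x) - p x * Real.log (Q x) := by
        field_simp
      rw [h1, hlogQ, Finset.mul_sum]
  -- marginal integral identities and integrability
  have hpNN : Measurable fun x => (p x).toNNReal := by
    exact measurable_real_toNNReal.comp hp_meas
  have hDval : ∀ i, ∫ x, p x * Real.log (pm i (x i))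
      = ∫ t, pm i t * Real.log (pm i t) := by
    intro i
    set Li : ℝ → ℝ := fun t => Real.log (pm i t) with hLi
    have hLim : Measurable Li := Real.measurable_log.comp (hpm_meas i)
    have e1 : ∫ x, p x * Li (x i) = ∫ x, Li (x i) ∂μ := by
      rw [hμ, show (fun x => ENNReal.ofReal (p x)) = fun x => (((p x).toNNReal : ℝ≥0) : ℝ≥0∞)
        from rfl, integral_withDensity_eq_integral_smul hpNN]
      refine integral_congr_ae (Filter.Eventually.of_forall fun x => ?_)
      simp [NNReal.smul_def, Real.coe_toNNReal _ (hp_nonneg x)]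
    have e2 : ∫ x, Li (x i) ∂μ
        = ∫ t, Li t ∂(volume.withDensity fun t => ENNReal.ofReal (pm i t)) := by
      rw [← h_marg i, integral_map (measurable_pi_apply i).aemeasurable
        (hLim.aestronglyMeasurable)]
    have e3 : (∫ t, Li t ∂(volume.withDensity fun t => ENNReal.ofReal (pm i t)))
        = ∫ t, pm i t * Li t := by
      rw [show (fun t => ENNReal.ofReal (pm i t))
        = fun t => (((pm i t).toNNReal : ℝ≥0) : ℝ≥0∞) from rfl,
        integral_withDensity_eq_integral_smul (hpmNN i)]
      refine integral_congr_ae (Filter.Eventually.of_forall fun t => ?_)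
      simp [NNReal.smul_def, Real.coe_toNNReal _ (hpm_pos i t).le]
    rw [e1, e2, e3]
  have hDint : ∀ i, Integrable (fun x => p x * Real.log (pm i (x i))) := by
    intro i
    set Li : ℝ → ℝ := fun t => Real.log (pm i t) with hLi
    have hLim : Measurable Li := Real.measurable_log.comp (hpm_meas i)
    have b : Integrable Li (volume.withDensity fun t => ENNReal.ofReal (pm i t)) := by
      rw [show (fun t => ENNReal.ofReal (pm i t))
        = fun t => (((pm i t).toNNReal : ℝ≥0) : ℝ≥0∞) from rfl,
        integrable_withDensity_iff_integrable_smul (hpmNN i)]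
      have : (fun t => ((pm i t).toNNReal : ℝ≥0) • Li t) = fun t => pm i t * Li t := by
        funext t
        simp [NNReal.smul_def, Real.coe_toNNReal _ (hpm_pos i t).le]
      rw [this]
      exact h_int₂ i
    have d : Integrable (fun x => Li (x i)) μ := by
      rw [← h_marg i] at b
      exact (integrable_map_measure hLim.aestronglyMeasurable
        (measurable_pi_apply i).aemeasurable).mp b
    rw [hμ] at d
    rw [show (fun x => ENNReal.ofReal (p x)) = fun x => (((p x).toNNReal : ℝ≥0) : ℝ≥0∞)
      from rfl, integrable_withDensity_iff_integrable_smul hpNN] at d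
    have : (fun x => ((p x).toNNReal : ℝ≥0) • Li (x i)) = fun x => p x * Li (x i) := by
      funext x
      simp [NNReal.smul_def, Real.coe_toNNReal _ (hp_nonneg x)]
    rwa [this] at d
  -- putting it together
  have hC : ∫ u in box, G u = (∫ x, p x * Real.log (p x))
      - ∑ i, ∫ t, pm i t * Real.log (pm i t) := by
    rw [hC1, hsmulQ]
    calc ∫ x, Q x * G (Φ x)
        = ∫ x, (p x * Real.log (p x) - ∑ i, p x * Real.log (pm i (x i))) := by
          exact integral_congr_ae (Filter.Eventually.of_forall hpt)
      _ = (∫ x, p x * Real.log (p x)) - ∫ x, ∑ i, p x * Real.log (pm i (x i)) :=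
          integral_sub h_int₁ (integrable_finset_sum _ fun i _ => hDint i)
      _ = (∫ x, p x * Real.log (p x)) - ∑ i, ∫ x, p x * Real.log (pm i (x i)) := by
          rw [integral_finset_sum _ fun i _ => hDint i]
      _ = (∫ x, p x * Real.log (p x)) - ∑ i, ∫ t, pm i t * Real.log (pm i t) := by
          simp_rw [hDval]
  simp only [Finset.sum_neg_distrib]
  have hgoal : (∫ u in box, G u) = ∫ u in box, c u * Real.log (c u) := rfl
  linarith [hC, hgoal]
end
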